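/- arXiv:1302.2046 — 2 statements merged into one kernel-verified Lean document; each statement's English description precedes it below -/
import Mathlib

section
/- Let A be a torsion-free K[t^{±1}]-algebra, R = A[x; σ, Δ] an Ore extension such that R/(t−1)R is commutative. Then R/(t−1)R is the Poisson-Ore extension A̅[X; α, δ]_P where A̅ = A/(t−1)A, X = x̄, α(ā) = ((σ(a)−a)/(t−1))|_{t=1} and δ(ā) = (Δ(a)/(t−1))|_{t=1}; in particular σ(a) − a ∈ (t−1)A and Δ(a) ∈ (t−1)A for all a ∈ A, α is a Poisson derivation of A̅ and δ is a Poisson α-derivation. -/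
open LaurentPolynomial

/-- A Poisson bracket on a commutative `K`-algebra `S`. -/
structure PoissonStructure (K S : Type*) [CommRing K] [CommRing S] [Algebra K S] where
  br : S → S → S
  add_left : ∀ a b c : S, br (a + b) c = br a c + br b c
  smul_left : ∀ (k : K) (a b : S), br (k • a) b = k • br a b
  skew : ∀ a b : S, br a b = - br b a
  leibniz : ∀ a b c : S, br a (b * c) = br a b * c + b * br a c
  jacobi : ∀ a b c : S, br a (br b c) + br b (br c a) + br c (br a b) = 0

/-- Semiclassical limit of an Ore extension: let `A` be a torsion-free
`K[t^{±1}]`-algebra and `R = A[x; σ, Δ]` an Ore extension (modelled by a ring `R`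
containing `A` via `ι`, with `x·ι(a) = ι(σa)·x + ι(Δa)` and `R` free with basis
`(xⁿ)` over `A`), such that `S = R/(t−1)R` is commutative, with semiclassical
Poisson bracket `Q`. Then `σ(a) − a ∈ (t−1)A` and `Δ(a) ∈ (t−1)A` for all `a`, and
`S` is the Poisson–Ore extension `Ā[X; α, δ]_P` where `α = ((σ−id)/(t−1))|_{t=1}`
is a Poisson derivation of `Ā = A/(t−1)A` and `δ = (Δ/(t−1))|_{t=1}` is a Poisson
`α`-derivation. -/
theorem stmt17 {K A R S : Type*} [Field K] [Ring A]
    [Algebra (LaurentPolynomial K) A] [Ring R] [CommRing S] [Algebra K S]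
    -- `A` is torsion-free over `K[t^{±1}]`
    (htf : ∀ (l : LaurentPolynomial K) (a : A), l • a = 0 → l = 0 ∨ a = 0)
    -- the Ore extension data
    (σ : A ≃+* A) (hσl : ∀ (l : LaurentPolynomial K) (a : A), σ (l • a) = l • σ a)
    (Δ : A → A) (hΔadd : ∀ a b : A, Δ (a + b) = Δ a + Δ b)
    (hΔl : ∀ (l : LaurentPolynomial K) (a : A), Δ (l • a) = l • Δ a)
    (hΔder : ∀ a b : A, Δ (a * b) = σ a * Δ b + Δ a * b)
    (ι : A →+* R) (x : R)
    (hore : ∀ a : A, x * ι a = ι (σ a) * x + ι (Δ a))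
    (hbasis : ∀ rr : R, ∃ f : ℕ →₀ A, rr = f.sum fun n a => ι a * x ^ n)
    (hfree : ∀ f : ℕ →₀ A, (f.sum fun n a => ι a * x ^ n) = 0 → f = 0)
    -- the element `t − 1` of `A`
    (cA : A) (hcA : cA = algebraMap (LaurentPolynomial K) A (T 1 - 1))
    -- the quotient `S = R/(t−1)R`, which is commutative
    (π : R →+* S) (hsurj : Function.Surjective π)
    (hker : ∀ rr : R, π rr = 0 ↔ ∃ y : R, rr = ι cA * y)
    -- the semiclassical limit Poisson bracket on `S`
    (Q : PoissonStructure K S)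
    (hQ : ∀ r s : R, ∀ z : R, r * s - s * r = ι cA * z → Q.br (π r) (π s) = π z) :
    -- (σ − id)(A) ⊆ (t−1)A and Δ(A) ⊆ (t−1)A:
    (∀ a : A, (∃ b : A, σ a - a = cA * b) ∧ (∃ b : A, Δ a = cA * b)) ∧
    -- the induced maps `α` and `δ` make `S = Ā[X; α, δ]_P`:
    ∃ α δ : S → S,
      (∀ a b : A, σ a - a = cA * b → α (π (ι a)) = π (ι b)) ∧
      (∀ a b : A, Δ a = cA * b → δ (π (ι a)) = π (ι b)) ∧
      -- `{X, ā} = α(ā) X + δ(ā)`: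
      (∀ a : A, Q.br (π x) (π (ι a)) = α (π (ι a)) * π x + δ (π (ι a))) ∧
      -- `α` is a Poisson derivation of `Ā`:
      (∀ a b : A, α (π (ι (a + b))) = α (π (ι a)) + α (π (ι b))) ∧
      (∀ a b : A, α (π (ι (a * b))) = α (π (ι a)) * π (ι b) + π (ι a) * α (π (ι b))) ∧
      (∀ a b : A, α (Q.br (π (ι a)) (π (ι b)))
        = Q.br (α (π (ι a))) (π (ι b)) + Q.br (π (ι a)) (α (π (ι b)))) ∧
      -- `δ` is a Poisson `α`-derivation of `Ā`:
      (∀ a b : A, δ (π (ι (a + b))) = δ (π (ι a)) + δ (π (ι b))) ∧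
      (∀ a b : A, δ (π (ι (a * b))) = δ (π (ι a)) * π (ι b) + π (ι a) * δ (π (ι b))) ∧
      (∀ a b : A, δ (Q.br (π (ι a)) (π (ι b)))
        = Q.br (δ (π (ι a))) (π (ι b)) + Q.br (π (ι a)) (δ (π (ι b)))
          + α (π (ι a)) * δ (π (ι b)) - δ (π (ι a)) * α (π (ι b))) ∧
      -- `S` is the polynomial ring `Ā[X]` with `X = π x`:
      (∀ s : S, ∃ f : ℕ →₀ A, s = f.sum fun n a => π (ι a) * (π x) ^ n) ∧
      (∀ f : ℕ →₀ A, (f.sum fun n a => π (ι a) * (π x) ^ n) = 0 →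
        ∀ n : ℕ, π (ι (f n)) = 0) := by
  classical
  -- basic facts about cA
  have hsmul : ∀ b : A, cA * b = (T 1 - 1 : LaurentPolynomial K) • b := fun b => by
    rw [hcA, Algebra.smul_def]
  have hTne : (T 1 - 1 : LaurentPolynomial K) ≠ 0 := by
    have h : (T 1 - 1 : LaurentPolynomial K) = Polynomial.toLaurent (Polynomial.X - 1) := by
      rw [map_sub, Polynomial.toLaurent_X, map_one]
    rw [h]
    refine Polynomial.toLaurent_ne_zero.mpr ?_
    have := Polynomial.X_sub_C_ne_zero (1 : K)
    simpa using this
  have hcz : ∀ b : A, cA * b = 0 → b = 0 := fun b hb => by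
    rcases htf _ _ (by rw [← hsmul]; exact hb) with h | h
    · exact absurd h hTne
    · exact h
  have hcinj : ∀ u v : A, cA * u = cA * v → u = v := fun u v h => by
    have h0 : cA * (u - v) = 0 := by rw [mul_sub, h, sub_self]
    exact sub_eq_zero.mp (hcz _ h0)
  have hccomm : ∀ a : A, cA * a = a * cA := fun a => by
    rw [hcA]; exact Algebra.commutes _ _
  have hcen : ∀ u v : A, u * (cA * v) = cA * (u * v) := fun u v => by
    rw [← mul_assoc, ← hccomm, mul_assoc]
  have hσc : ∀ c : A, σ (cA * c) = cA * σ c := fun c => by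
    rw [hsmul, hσl, hsmul]
  have hΔc : ∀ c : A, Δ (cA * c) = cA * Δ c := fun c => by
    rw [hsmul, hΔl, hsmul]
  have hΔ1 : Δ (1 : A) = 0 := by
    have h := hΔder 1 1
    rw [mul_one, map_one, one_mul, mul_one] at h
    exact (left_eq_add.mp h)
  have hΔsub : ∀ a b : A, Δ (a - b) = Δ a - Δ b := fun a b => by
    have h := hΔadd (a - b) b
    rw [sub_add_cancel] at h
    exact eq_sub_of_add_eq h.symm
  have hcσ : σ cA = cA := by
    have h : cA = cA * 1 := (mul_one _).symm
    rw [h, hσc, map_one, mul_one]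
  have hΔcA0 : Δ cA = 0 := by
    rw [show cA = cA * 1 from (mul_one _).symm, hΔc, hΔ1, mul_zero]
  -- freeness tool
  have LSUM : ∀ f g : ℕ →₀ A,
      (f.sum fun n a => ι a * x ^ n) = ι cA * (g.sum fun n a => ι a * x ^ n) →
      ∀ n, f n = cA * g n := by
    intro f g hfg n
    have hmap : ι cA * (g.sum fun n a => ι a * x ^ n)
        = (g.mapRange (fun a => cA * a) (mul_zero cA)).sum fun n a => ι a * x ^ n := by
      rw [Finsupp.mul_sum, Finsupp.sum_mapRange_index (fun n => by rw [map_zero, zero_mul])]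
      exact Finsupp.sum_congr fun n _ => by rw [← mul_assoc, ← map_mul]
    have hz : ((f - g.mapRange (fun a => cA * a) (mul_zero cA)).sum
        fun n a => ι a * x ^ n) = 0 := by
      rw [Finsupp.sum_sub_index (fun n b1 b2 => by rw [map_sub, sub_mul]), ← hmap, hfg,
        sub_self]
    have hf0 := hfree _ hz
    have : f = g.mapRange (fun a => cA * a) (mul_zero cA) := sub_eq_zero.mp hf0
    rw [this, Finsupp.mapRange_apply]
  -- sums with two terms
  have hsum01 : ∀ a0 a1 : A,
      ((Finsupp.single 0 a0 + Finsupp.single 1 a1).sum fun n a => ι a * x ^ n)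
        = ι a0 + ι a1 * x := by
    intro a0 a1
    rw [Finsupp.sum_add_index (fun n _ => by rw [map_zero, zero_mul])
      (fun n _ b1 b2 => by rw [map_add, add_mul]),
      Finsupp.sum_single_index (by rw [map_zero, zero_mul]),
      Finsupp.sum_single_index (by rw [map_zero, zero_mul]), pow_zero, mul_one, pow_one]
  have hker01 : ∀ a0 a1 : A, π (ι a0 + ι a1 * x) = 0 →
      (∃ b, a0 = cA * b) ∧ (∃ b, a1 = cA * b) := by
    intro a0 a1 h
    obtain ⟨y, hy⟩ := (hker _).mp h
    obtain ⟨g, hg⟩ := hbasis y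
    have key := LSUM (Finsupp.single 0 a0 + Finsupp.single 1 a1) g
      (by rw [hsum01, hy, hg])
    constructor
    · exact ⟨g 0, by simpa using key 0⟩
    · exact ⟨g 1, by simpa using key 1⟩
  have hkerA : ∀ c : A, π (ι c) = 0 ↔ ∃ b, c = cA * b := by
    intro c
    constructor
    · intro h
      refine (hker01 c 0 ?_).1
      rw [map_zero, zero_mul, add_zero, h]
    · rintro ⟨b, rfl⟩
      exact (hker _).mpr ⟨ι b, map_mul ι cA b⟩
  -- part 1
  have h1 : ∀ a : A, (∃ b : A, σ a - a = cA * b) ∧ (∃ b : A, Δ a = cA * b) := by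
    intro a
    have hc : π (x * ι a - ι a * x) = 0 := by
      rw [map_sub, map_mul, map_mul, mul_comm, sub_self]
    have hrw : x * ι a - ι a * x = ι (Δ a) + ι (σ a - a) * x := by
      rw [hore a, map_sub, sub_mul]
      abel
    have h2 := hker01 (Δ a) (σ a - a) (by rw [← hrw]; exact hc)
    exact ⟨h2.2, h2.1⟩
  -- bracket on A
  have hQA : ∀ a b : A, ∃ c : A,
      a * b - b * a = cA * c ∧ Q.br (π (ι a)) (π (ι b)) = π (ι c) := by
    intro a b
    have h0 : π (ι (a * b - b * a)) = 0 := by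
      simp only [map_sub, map_mul]
      rw [mul_comm (π (ι a)), sub_self]
    obtain ⟨y, hy⟩ := (hker _).mp h0
    obtain ⟨g, hg⟩ := hbasis y
    have hsing : ((Finsupp.single 0 (a * b - b * a)).sum fun n a => ι a * x ^ n)
        = ι (a * b - b * a) := by
      rw [Finsupp.sum_single_index (by rw [map_zero, zero_mul]), pow_zero, mul_one]
    have key := LSUM (Finsupp.single 0 (a * b - b * a)) g (by rw [hsing, hy, hg])
    have hg0 : a * b - b * a = cA * g 0 := by simpa using key 0
    have hgeq : g = Finsupp.single 0 (g 0) := by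
      ext n
      rcases eq_or_ne n 0 with h | h
      · subst h; simp
      · have hn := key n
        rw [Finsupp.single_apply, if_neg (fun hh => h hh.symm)] at hn
        rw [Finsupp.single_apply, if_neg (fun hh => h hh.symm)]
        exact hcz _ hn.symm
    have hyval : y = ι (g 0) := by
      rw [hg, hgeq, Finsupp.sum_single_index (by rw [map_zero, zero_mul]), pow_zero, mul_one]
      simp
    refine ⟨g 0, hg0, ?_⟩
    have hq := hQ (ι a) (ι b) y (by rw [← map_mul, ← map_mul, ← map_sub, hy])
    rw [hq, hyval]
  refine ⟨h1, ?_⟩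
  choose a1f ha1 using fun a => (h1 a).1
  choose a2f ha2 using fun a => (h1 a).2
  have hσeq : ∀ a : A, σ a = a + cA * a1f a := fun a => by
    have := ha1 a; rw [← this, add_sub_cancel]
  have hΔeq : ∀ a : A, Δ a = cA * a2f a := ha2
  -- well-definedness
  have hwdσ : ∀ a a' b b' : A, π (ι a) = π (ι a') → σ a - a = cA * b →
      σ a' - a' = cA * b' → π (ι b) = π (ι b') := by
    intro a a' b b' he hb hb'
    have h0 : π (ι (a - a')) = 0 := by rw [map_sub, map_sub, he, sub_self]
    obtain ⟨c, hc⟩ := (hkerA _).mp h0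
    have heq : cA * (b - b') = cA * (σ c - c) := by
      rw [mul_sub, ← hb, ← hb', mul_sub, ← hσc, ← hc, map_sub]
      abel
    have hbb := hcinj _ _ heq
    have h2 : π (ι (b - b')) = 0 := by
      rw [hbb]; exact (hkerA _).mpr ⟨a1f c, ha1 c⟩
    rw [map_sub, map_sub] at h2
    exact sub_eq_zero.mp h2
  have hwdΔ : ∀ a a' b b' : A, π (ι a) = π (ι a') → Δ a = cA * b →
      Δ a' = cA * b' → π (ι b) = π (ι b') := by
    intro a a' b b' he hb hb'
    have h0 : π (ι (a - a')) = 0 := by rw [map_sub, map_sub, he, sub_self]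
    obtain ⟨c, hc⟩ := (hkerA _).mp h0
    have heq : cA * (b - b') = cA * Δ c := by
      rw [mul_sub, ← hb, ← hb', ← hΔc, ← hc, hΔsub]
    have hbb := hcinj _ _ heq
    have h2 : π (ι (b - b')) = 0 := by
      rw [hbb]; exact (hkerA _).mpr ⟨a2f c, ha2 c⟩
    rw [map_sub, map_sub] at h2
    exact sub_eq_zero.mp h2
  set α : S → S := fun s =>
    if h : ∃ a : A, π (ι a) = s then π (ι (a1f h.choose)) else 0 with hαdef
  set δ' : S → S := fun s =>
    if h : ∃ a : A, π (ι a) = s then π (ι (a2f h.choose)) else 0 with hδdef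
  have αspec : ∀ a b : A, σ a - a = cA * b → α (π (ι a)) = π (ι b) := by
    intro a b hb
    have hex : ∃ a' : A, π (ι a') = π (ι a) := ⟨a, rfl⟩
    rw [hαdef]
    simp only [dif_pos hex]
    exact hwdσ hex.choose a _ b hex.choose_spec (ha1 _) hb
  have δspec : ∀ a b : A, Δ a = cA * b → δ' (π (ι a)) = π (ι b) := by
    intro a b hb
    have hex : ∃ a' : A, π (ι a') = π (ι a) := ⟨a, rfl⟩
    rw [hδdef]
    simp only [dif_pos hex]
    exact hwdΔ hex.choose a _ b hex.choose_spec (ha2 _) hb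
  have hπσ : ∀ a : A, π (ι (σ a)) = π (ι a) := by
    intro a
    have h0 : π (ι (σ a - a)) = 0 := (hkerA _).mpr ⟨a1f a, ha1 a⟩
    rw [map_sub, map_sub] at h0
    exact sub_eq_zero.mp h0
  have hπκ : ∀ u v : A, u = cA * v → π (ι u) = 0 := fun u v h =>
    (hkerA u).mpr ⟨v, h⟩
  refine ⟨α, δ', αspec, δspec, ?_, ?_, ?_, ?_, ?_, ?_, ?_, ?_, ?_⟩
  · -- {X, ā} = α(ā) X + δ(ā)
    intro a
    have hrw : x * ι a - ι a * x = ι cA * (ι (a1f a) * x + ι (a2f a)) := by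
      rw [hore a, hσeq a, hΔeq a, map_add, map_mul, map_mul, add_mul, mul_add,
        mul_assoc]
      abel
    rw [hQ x (ι a) _ hrw, map_add, map_mul, αspec a _ (ha1 a), δspec a _ (ha2 a)]
  · -- α additive
    intro a b
    have h : σ (a + b) - (a + b) = cA * (a1f a + a1f b) := by
      rw [map_add, mul_add, ← ha1 a, ← ha1 b]
      abel
    rw [αspec _ _ h, map_add, map_add, αspec a _ (ha1 a), αspec b _ (ha1 b)]
  · -- α Leibniz
    intro a b
    have h : σ (a * b) - a * b = cA * (σ a * a1f b + a1f a * b) := by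
      have e : σ (a * b) - a * b = σ a * (σ b - b) + (σ a - a) * b := by
        rw [map_mul]; noncomm_ring
      rw [e, ha1 a, ha1 b, hcen, mul_assoc, ← mul_add]
    rw [αspec _ _ h, map_add, map_add, map_mul, map_mul, map_mul, map_mul,
      hπσ a, αspec a _ (ha1 a), αspec b _ (ha1 b)]
    ring
  · -- α Poisson derivation for Q
    intro a b
    obtain ⟨c, hc1, hc2⟩ := hQA a b
    obtain ⟨e1, he1, he1'⟩ := hQA (a1f a) b
    obtain ⟨e2, he2, he2'⟩ := hQA a (a1f b)
    have hd : σ c - c = cA * (e1 + e2 + (a1f a * a1f b - a1f b * a1f a)) := by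
      apply hcinj
      conv_rhs => simp only [mul_add]
      rw [← he1, ← he2, mul_sub, ← hσc, ← hc1, map_sub, map_mul, map_mul, hσeq a, hσeq b]
      simp only [mul_add, add_mul, mul_sub, sub_mul, mul_assoc, hcen]
      abel
    have hw0 : π (ι (a1f a * a1f b - a1f b * a1f a)) = 0 := by
      obtain ⟨e3, he3, -⟩ := hQA (a1f a) (a1f b)
      exact hπκ _ _ he3
    rw [hc2, αspec c _ hd]
    simp only [map_add]
    rw [hw0, αspec a _ (ha1 a), αspec b _ (ha1 b), he1', he2']
    ring
  · -- δ additive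
    intro a b
    have h : Δ (a + b) = cA * (a2f a + a2f b) := by
      rw [hΔadd, mul_add, ← ha2 a, ← ha2 b]
    rw [δspec _ _ h, map_add, map_add, δspec a _ (ha2 a), δspec b _ (ha2 b)]
  · -- δ Leibniz
    intro a b
    have h : Δ (a * b) = cA * (σ a * a2f b + a2f a * b) := by
      rw [hΔder, ha2 b, ha2 a, hcen, mul_assoc, ← mul_add]
    rw [δspec _ _ h, map_add, map_add, map_mul, map_mul, map_mul, map_mul,
      hπσ a, δspec a _ (ha2 a), δspec b _ (ha2 b)]
    ring
  · -- δ Poisson α-derivation for Q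
    intro a b
    obtain ⟨c, hc1, hc2⟩ := hQA a b
    obtain ⟨e1, he1, he1'⟩ := hQA (a2f a) b
    obtain ⟨e2, he2, he2'⟩ := hQA a (a2f b)
    have hd : Δ c = cA * (e1 + e2 + (a1f a * a2f b - a1f b * a2f a)) := by
      apply hcinj
      conv_rhs => simp only [mul_add]
      rw [← he1, ← he2, ← hΔc, ← hc1, hΔsub, hΔder, hΔder, hσeq a, hσeq b, ha2 a, ha2 b]
      simp only [mul_add, add_mul, mul_sub, sub_mul, mul_assoc, hcen]
      abel
    have hw0 : π (ι (a1f a * a2f b - a1f b * a2f a))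
        = π (ι (a1f a)) * π (ι (a2f b)) - π (ι (a2f a)) * π (ι (a1f b)) := by
      simp only [map_sub, map_mul]
      ring
    rw [hc2, δspec c _ hd]
    simp only [map_add]
    rw [hw0, αspec a _ (ha1 a), αspec b _ (ha1 b), δspec a _ (ha2 a), δspec b _ (ha2 b),
      he1', he2']
    ring
  · -- surjectivity of the basis
    intro s
    obtain ⟨r, rfl⟩ := hsurj s
    obtain ⟨f, rfl⟩ := hbasis r
    refine ⟨f, ?_⟩
    rw [map_finsuppSum]
    exact Finsupp.sum_congr fun n _ => by rw [map_mul, map_pow]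
  · -- freeness of the basis
    intro f hf n
    have h0 : π (f.sum fun n a => ι a * x ^ n) = 0 := by
      rw [map_finsuppSum]
      rw [show (f.sum fun n a => π (ι a * x ^ n)) = f.sum fun n a => π (ι a) * (π x) ^ n
        from Finsupp.sum_congr fun n _ => by rw [map_mul, map_pow]]
      exact hf
    obtain ⟨y, hy⟩ := (hker _).mp h0
    obtain ⟨g, hg⟩ := hbasis y
    have key := LSUM f g (by rw [hy, hg])
    exact hπκ _ _ (key n)
end

section
/- Let A be a torsion-free K[t^{±1}]-algebra with Ore extension R = A[x;σ,Δ] such that R/(t−1)R is commutative, and suppose Δσ = t^η σΔ for an integer η whose image in K is nonzero, and Δ^i(A) ⊆ (t−1)^i (i)!_{t^η} A for all i ≥ 0. Then the maps D_i(ā) = (Δ^i(a)/((t−1)^i (i)!_{t^η}))|_{t=1} form an iterative higher (η,α)-skew Poisson derivation on A̅ = A/(t−1)A extending δ, which is locally nilpotent whenever Δ is locally nilpotent. -/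
open LaurentPolynomial

/-- The `q`-factorial `(i)!_q = (i)_q (i−1)_q ⋯ (1)_q` at `q = t^η`,
where `(k)_q = 1 + q + ⋯ + q^{k−1}`. -/
noncomputable def qfact (K : Type*) [Field K] (η : ℤ) (i : ℕ) : LaurentPolynomial K :=
  ∏ k ∈ Finset.range i, ∑ l ∈ Finset.range (k + 1), (T η : LaurentPolynomial K) ^ l


namespace Stmt18Aux
open Finset

variable (K : Type*) [Field K] (η : ℤ)

noncomputable def qI (k : ℕ) : LaurentPolynomial K := ∑ l ∈ range k, T η ^ l

lemma qfact_eq (i : ℕ) : qfact K η i = ∏ k ∈ range i, qI K η (k+1) := rfl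

lemma qfact_zero : qfact K η 0 = 1 := by simp [qfact]

lemma qfact_succ (i : ℕ) : qfact K η (i+1) = qfact K η i * qI K η (i+1) := by
  rw [qfact_eq, qfact_eq, prod_range_succ]

lemma qI_succ (k : ℕ) : qI K η (k+1) = qI K η k + T η ^ k := by
  simp only [qI, sum_range_succ]

lemma qI_add (a b : ℕ) : qI K η (a + b) = qI K η a + T η ^ a * qI K η b := by
  induction b with
  | zero => simp [qI]
  | succ b ih =>
    show qI K η ((a + b) + 1) = _
    rw [qI_succ, ih, qI_succ K η b]
    ring

noncomputable def qbin : ℕ → ℕ → LaurentPolynomial K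
  | _, 0 => 1
  | 0, _+1 => 0
  | n+1, i+1 => qbin n i + T η ^ (i+1) * qbin n (i+1)

lemma qbin_zero (n : ℕ) : qbin K η n 0 = 1 := by cases n <;> rfl

lemma qbin_succ (n i : ℕ) :
    qbin K η (n+1) (i+1) = qbin K η n i + T η ^ (i+1) * qbin K η n (i+1) := rfl

lemma qbin_of_lt : ∀ {n i : ℕ}, n < i → qbin K η n i = 0 := by
  intro n
  induction n with
  | zero => intro i hi; cases i with
    | zero => omega
    | succ i => rfl
  | succ n ih =>
    intro i hi
    cases i with
    | zero => omega
    | succ i => rw [qbin_succ, ih (by omega), ih (by omega)]; ring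

lemma qbin_mul_qfact : ∀ {n i : ℕ}, i ≤ n →
    qbin K η n i * (qfact K η i * qfact K η (n - i)) = qfact K η n := by
  intro n
  induction n with
  | zero => intro i hi
            interval_cases i
            simp [qbin_zero, qfact_zero]
  | succ n ih =>
    intro i hi
    cases i with
    | zero => simp [qbin_zero, qfact_zero]
    | succ j =>
      rcases Nat.lt_or_ge j n with hj | hj
      · have hj1 : j + 1 ≤ n := hj
        have hm : n - j = (n - (j+1)) + 1 := by omega
        have hnm : (j+1) + ((n - (j+1)) + 1) = n + 1 := by omega
        have hsum := qI_add K η (j+1) (n - (j+1) + 1)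
        rw [hnm] at hsum
        have ih1 := ih (Nat.le_of_succ_le hj1)
        have ih2 := ih hj1
        rw [hm, qfact_succ K η (n - (j+1))] at ih1
        rw [qfact_succ K η j] at ih2
        rw [Nat.succ_sub_succ, hm, qbin_succ, qfact_succ K η n, qfact_succ K η j,
          qfact_succ K η (n - (j+1))]
        linear_combination (qI K η (j+1)) * ih1
          + (T η ^ (j+1) * qI K η (n - (j+1) + 1)) * ih2
          - (qfact K η n) * hsum
      · have hj' : j = n := by omega
        subst hj'
        have ihn := ih (le_refl j)
        rw [Nat.sub_self, qfact_zero] at ihn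
        rw [Nat.succ_sub_succ, Nat.sub_self, qbin_succ,
          qbin_of_lt K η (Nat.lt_succ_self j), qfact_zero, qfact_succ K η j]
        linear_combination (qI K η (j+1)) * ihn

lemma qfact_one : qfact K η 1 = 1 := by
  rw [qfact_succ, qfact_zero, one_mul, qI_succ]
  simp [qI]

lemma T_mod (m : ℤ) : ∃ h : LaurentPolynomial K,
    (T m : LaurentPolynomial K)
      = 1 + (m : LaurentPolynomial K) * (T 1 - 1) + (T 1 - 1)^2 * h := by
  have hX : (T (-1) : LaurentPolynomial K) * T 1 = 1 := by
    rw [← T_add]; norm_num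
  have hX2 : (T (-1) : LaurentPolynomial K)
      = 1 - (T 1 - 1) + (T 1 - 1)^2 * T (-1) := by
    linear_combination ((2 : LaurentPolynomial K) - T 1) * hX
  induction m using Int.induction_on with
  | zero => exact ⟨0, by simp⟩
  | succ n ih =>
    obtain ⟨h, hh⟩ := ih
    refine ⟨h + (n : LaurentPolynomial K) + (T 1 - 1) * h, ?_⟩
    have ht : (T ((n:ℤ)+1) : LaurentPolynomial K) = T n * T 1 := T_add n 1
    rw [ht, hh]
    push_cast
    ring
  | pred n ih =>
    obtain ⟨h, hh⟩ := ih
    refine ⟨T (-1) + (n : LaurentPolynomial K)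
      + (((-(n:ℤ) : ℤ) : LaurentPolynomial K) * (T 1 - 1)) * T (-1)
      + h * (1 - (T 1 - 1) + (T 1 - 1)^2 * T (-1)), ?_⟩
    have he : (-(n:ℤ)-1) = (-(n:ℤ)) + (-1) := by ring
    rw [he, T_add]
    push_cast at hh ⊢
    linear_combination (T (-1) : LaurentPolynomial K) * hh
      + (1 - (n : LaurentPolynomial K) * (T 1 - 1) + (T 1 - 1)^2 * h) * hX2

lemma qbin_mod (n i : ℕ) : ∃ h : LaurentPolynomial K,
    qbin K η n i = ((n.choose i : ℕ) : LaurentPolynomial K) + (T 1 - 1) * h := by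
  induction n generalizing i with
  | zero =>
    cases i with
    | zero => exact ⟨0, by simp [qbin_zero]⟩
    | succ i =>
      refine ⟨0, ?_⟩
      rw [show qbin K η 0 (i+1) = 0 from rfl, Nat.choose_zero_succ]
      simp
  | succ n ih =>
    cases i with
    | zero => exact ⟨0, by simp [qbin_zero]⟩
    | succ i =>
      obtain ⟨h1, hh1⟩ := ih i
      obtain ⟨h2, hh2⟩ := ih (i+1)
      obtain ⟨g, hg⟩ := T_mod K (((i+1 : ℕ) : ℤ) * η)
      have hT : (T η : LaurentPolynomial K) ^ (i+1) = T (((i+1 : ℕ) : ℤ) * η) := T_pow η (i+1)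
      refine ⟨h1 + h2 + (((((i+1:ℕ) : ℤ) * η : ℤ) : LaurentPolynomial K) + (T 1 - 1) * g) *
        (((n.choose (i+1) : ℕ) : LaurentPolynomial K) + (T 1 - 1) * h2), ?_⟩
      rw [qbin_succ, hh1, hh2, hT, hg, Nat.choose_succ_succ]
      push_cast
      ring


lemma Tsub1_ne : (T 1 - 1 : LaurentPolynomial K) ≠ 0 := by
  intro h
  have h1 := congrArg (fun p : LaurentPolynomial K => p.coeff (1:ℤ)) h
  rw [← T_zero (R := K)] at h1
  simp only [AddMonoidAlgebra.coeff_sub, Finsupp.sub_apply, T_apply] at h1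
  norm_num at h1

lemma qI_ne (hη : η ≠ 0) (k : ℕ) : qI K η (k+1) ≠ 0 := by
  intro h
  have h1 := congrArg (fun p : LaurentPolynomial K => p.coeff (0:ℤ)) h
  simp only [qI, AddMonoidAlgebra.coeff_sum, Finsupp.finset_sum_apply,
    AddMonoidAlgebra.coeff_zero, Finsupp.coe_zero, Pi.zero_apply, T_pow] at h1
  have h2 : ∀ l ∈ Finset.range (k+1),
      (T ((l:ℤ) * η) : LaurentPolynomial K).coeff 0 = if l = 0 then (1:K) else 0 := by
    intro l _
    rw [T_apply]
    by_cases hl : l = 0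
    · simp [hl]
    · rw [if_neg hl, if_neg (by
        simp only [mul_eq_zero]
        push_neg
        exact ⟨by exact_mod_cast hl, hη⟩)]
  rw [Finset.sum_congr rfl h2, Finset.sum_ite_eq' (Finset.range (k+1)) 0 (fun _ => (1:K))] at h1
  simp at h1

lemma qfact_ne (hη : η ≠ 0) (i : ℕ) : qfact K η i ≠ 0 := by
  rw [qfact_eq]
  rw [Finset.prod_ne_zero_iff]
  exact fun k _ => qI_ne K η hη k

end Stmt18Aux


open Stmt18Aux

/-- Semiclassical limit higher derivations: if `Δσ = t^η σΔ` and
`Δⁱ(A) ⊆ (t−1)ⁱ (i)!_{t^η} A` for all `i`, then the maps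
`Dᵢ(ā) = (Δⁱ(a)/((t−1)ⁱ(i)!_{t^η}))|_{t=1}` form an iterative higher `(η,α)`-skew
Poisson derivation on `Ā = A/(t−1)A` extending `δ = (Δ/(t−1))|_{t=1}`, locally
nilpotent if `Δ` is. -/
theorem stmt18 {K A SA : Type*} [Field K] [Ring A]
    [Algebra (LaurentPolynomial K) A] [CommRing SA] [Algebra K SA]
    (htf : ∀ (l : LaurentPolynomial K) (a : A), l • a = 0 → l = 0 ∨ a = 0)
    (σ : A ≃+* A) (hσl : ∀ (l : LaurentPolynomial K) (a : A), σ (l • a) = l • σ a)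
    (Δ : A → A) (hΔadd : ∀ a b : A, Δ (a + b) = Δ a + Δ b)
    (hΔl : ∀ (l : LaurentPolynomial K) (a : A), Δ (l • a) = l • Δ a)
    (hΔder : ∀ a b : A, Δ (a * b) = σ a * Δ b + Δ a * b)
    -- the quotient `Ā = A/(t−1)A`, which is commutative
    (π : A →+* SA) (hsurj : Function.Surjective π)
    (hker : ∀ a : A, π a = 0 ↔ ∃ b : A, a = (T 1 - 1 : LaurentPolynomial K) • b)
    -- the semiclassical limit Poisson bracket on `Ā`
    (Q : PoissonStructure K SA)
    (hQ : ∀ a b z : A, a * b - b * a = (T 1 - 1 : LaurentPolynomial K) • z →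
      Q.br (π a) (π b) = π z)
    -- `σ − id` is divisible by `t − 1`, and `α = ((σ−id)/(t−1))|_{t=1}`
    (hσdiv : ∀ a : A, ∃ b : A, σ a - a = (T 1 - 1 : LaurentPolynomial K) • b)
    (α : SA → SA)
    (hα : ∀ a b : A, σ a - a = (T 1 - 1 : LaurentPolynomial K) • b → α (π a) = π b)
    -- `Δσ = t^η σΔ` with the image of `η` nonzero in `K`
    (η : ℤ) (hη : ((η : ℤ) : K) ≠ 0)
    (hcomm : ∀ a : A, Δ (σ a) = (T η : LaurentPolynomial K) • σ (Δ a))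
    -- `Δⁱ(A) ⊆ (t−1)ⁱ (i)!_{t^η} A`
    (hdiv : ∀ (i : ℕ) (a : A), ∃ b : A,
      Δ^[i] a = (((T 1 - 1 : LaurentPolynomial K) ^ i) * qfact K η i) • b) :
    ∃ D : ℕ → SA → SA,
      -- `Dᵢ(ā) = (Δⁱ(a)/((t−1)ⁱ (i)!_{t^η}))|_{t=1}`:
      (∀ (i : ℕ) (a b : A),
        Δ^[i] a = (((T 1 - 1 : LaurentPolynomial K) ^ i) * qfact K η i) • b →
          D i (π a) = π b) ∧
      -- `(Dᵢ)` is a higher derivation on `Ā`: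
      (∀ a : A, D 0 (π a) = π a) ∧
      (∀ (i : ℕ) (a b : A), D i (π a + π b) = D i (π a) + D i (π b)) ∧
      (∀ (n : ℕ) (a b : A),
        D n (π a * π b) = ∑ i ∈ Finset.range (n + 1), D i (π a) * D (n - i) (π b)) ∧
      -- extending `δ = (Δ/(t−1))|_{t=1}`:
      (∀ a b : A, Δ a = (T 1 - 1 : LaurentPolynomial K) • b → D 1 (π a) = π b) ∧
      -- `(Dᵢ)` is higher `α`-skew Poisson (Axiom (A2)):
      (∀ (n : ℕ) (a b : A),
        D n (Q.br (π a) (π b)) = ∑ i ∈ Finset.range (n + 1),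
          (Q.br (D i (π a)) (D (n - i) (π b))
            + i • (α (D (n - i) (π a)) * D i (π b)
              - D i (π a) * α (D (n - i) (π b))))) ∧
      -- Axiom (A3) for `(η, α)`:
      (∀ (i : ℕ) (a : A),
        D i (α (π a)) = α (D i (π a)) + (i • ((η : ℤ) : K)) • D i (π a)) ∧
      -- `(Dᵢ)` is iterative:
      (∀ (i j : ℕ) (a : A), D i (D j (π a)) = ((i + j).choose i) • D (i + j) (π a)) ∧
      -- local nilpotence is inherited from `Δ`:
      ((∀ a : A, ∃ N : ℕ, ∀ i ≥ N, Δ^[i] a = 0) →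
        ∀ a : A, ∃ N : ℕ, ∀ i ≥ N, D i (π a) = 0) := by
  classical
  have hηz : η ≠ 0 := fun h => hη (by simp [h])
  have hu : (T 1 - 1 : LaurentPolynomial K) ≠ 0 := Tsub1_ne K
  have hcne : ∀ i : ℕ, ((T 1 - 1 : LaurentPolynomial K) ^ i * qfact K η i) ≠ 0 :=
    fun i => mul_ne_zero (pow_ne_zero _ hu) (qfact_ne K η hηz i)
  have cancel : ∀ (l : LaurentPolynomial K) (x y : A), l ≠ 0 → l • x = l • y → x = y := by
    intro l x y hl h
    have h2 : l • (x - y) = 0 := by rw [smul_sub, h, sub_self]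
    rcases htf l (x - y) h2 with h3 | h3
    · exact absurd h3 hl
    · exact sub_eq_zero.mp h3
  have π0 : ∀ z : A, π ((T 1 - 1 : LaurentPolynomial K) • z) = 0 :=
    fun z => (hker _).mpr ⟨z, rfl⟩
  have πσ : ∀ x : A, π (σ x) = π x := by
    intro x
    obtain ⟨g, hg⟩ := hσdiv x
    have h1 : σ x = x + (T 1 - 1 : LaurentPolynomial K) • g := by rw [← hg]; abel
    rw [h1, map_add, π0, add_zero]
  have πσi : ∀ (i : ℕ) (x : A), π (σ^[i] x) = π x := by
    intro i
    induction i with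
    | zero => intro x; rfl
    | succ i ih => intro x; rw [Function.iterate_succ_apply', πσ, ih]
  have Δ0 : Δ 0 = 0 := by
    have := hΔl 0 0
    simpa using this
  have Δsum : ∀ (s : Finset ℕ) (f : ℕ → A), Δ (∑ i ∈ s, f i) = ∑ i ∈ s, Δ (f i) := by
    intro s f
    induction s using Finset.cons_induction with
    | empty => simpa using Δ0
    | cons j s hj ih => rw [Finset.sum_cons, Finset.sum_cons, hΔadd, ih]
  have ΔIadd : ∀ (i : ℕ) (x y : A), Δ^[i] (x + y) = Δ^[i] x + Δ^[i] y := by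
    intro i
    induction i with
    | zero => intro x y; rfl
    | succ i ih =>
      intro x y
      rw [Function.iterate_succ_apply', Function.iterate_succ_apply',
        Function.iterate_succ_apply', ih, hΔadd]
  have ΔIsmul : ∀ (i : ℕ) (l : LaurentPolynomial K) (x : A),
      Δ^[i] (l • x) = l • Δ^[i] x := by
    intro i
    induction i with
    | zero => intro l x; rfl
    | succ i ih =>
      intro l x
      rw [Function.iterate_succ_apply', Function.iterate_succ_apply', ih, hΔl]
  have ΔIsub : ∀ (i : ℕ) (x y : A), Δ^[i] (x - y) = Δ^[i] x - Δ^[i] y := by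
    intro i x y
    have h1 : x - y = x + (-1 : LaurentPolynomial K) • y := by rw [neg_one_smul]; abel
    rw [h1, ΔIadd, ΔIsmul, neg_one_smul]; abel
  have σIsmul : ∀ (i : ℕ) (l : LaurentPolynomial K) (x : A),
      σ^[i] (l • x) = l • σ^[i] x := by
    intro i
    induction i with
    | zero => intro l x; rfl
    | succ i ih =>
      intro l x
      rw [Function.iterate_succ_apply', Function.iterate_succ_apply', ih, hσl]
  have Δσi : ∀ (i : ℕ) (x : A),
      Δ (σ^[i] x) = ((T η : LaurentPolynomial K) ^ i) • σ^[i] (Δ x) := by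
    intro i
    induction i with
    | zero => intro x; simp
    | succ i ih =>
      intro x
      rw [Function.iterate_succ_apply, Function.iterate_succ_apply, ih (σ x), hcomm,
        σIsmul, smul_smul, ← pow_succ]
  have ΔiσI : ∀ (i : ℕ) (x : A),
      Δ^[i] (σ x) = ((T η : LaurentPolynomial K) ^ i) • σ (Δ^[i] x) := by
    intro i
    induction i with
    | zero => intro x; simp
    | succ i ih =>
      intro x
      rw [Function.iterate_succ_apply, hcomm, ΔIsmul, ih (Δ x), smul_smul, ← pow_succ',
        ← Function.iterate_succ_apply]
  choose rep hrep using hsurj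
  choose dv hdv using hdiv
  set D : ℕ → SA → SA := fun i s => π (dv i (rep s)) with hD
  have key : ∀ (i : ℕ) (a b : A),
      Δ^[i] a = (((T 1 - 1 : LaurentPolynomial K) ^ i) * qfact K η i) • b →
        D i (π a) = π b := by
    intro i a b hb
    have h1 : π (rep (π a) - a) = 0 := by rw [map_sub, hrep, sub_self]
    obtain ⟨z, hz⟩ := (hker _).mp h1
    have h2 : rep (π a) = a + (T 1 - 1 : LaurentPolynomial K) • z := by rw [← hz]; abel
    have h3 : Δ^[i] (rep (π a))
        = (((T 1 - 1 : LaurentPolynomial K) ^ i) * qfact K η i) •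
          (b + (T 1 - 1 : LaurentPolynomial K) • dv i z) := by
      rw [h2, ΔIadd, hb, ΔIsmul, hdv i z, smul_add, smul_comm]
    have h4 : dv i (rep (π a)) = b + (T 1 - 1 : LaurentPolynomial K) • dv i z :=
      cancel _ _ _ (hcne i) (by rw [← hdv, h3])
    show π (dv i (rep (π a))) = π b
    rw [h4, map_add, π0, add_zero]
  have πqbin : ∀ (n i : ℕ) (x : A), π (qbin K η n i • x) = (n.choose i) • π x := by
    intro n i x
    obtain ⟨h, hh⟩ := qbin_mod K η n i
    rw [hh, add_smul, mul_smul, map_add, π0, add_zero, Nat.cast_smul_eq_nsmul, map_nsmul]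
  have hcc : ∀ n i : ℕ, i ≤ n →
      qbin K η n i * (((T 1 - 1 : LaurentPolynomial K) ^ (n-i) * qfact K η (n-i))
        * ((T 1 - 1 : LaurentPolynomial K) ^ i * qfact K η i))
      = (T 1 - 1 : LaurentPolynomial K) ^ n * qfact K η n := by
    intro n i hi
    have h1 := qbin_mul_qfact K η hi
    have h2 : (T 1 - 1 : LaurentPolynomial K) ^ (n-i) * (T 1 - 1) ^ i = (T 1 - 1) ^ n := by
      rw [← pow_add]; congr 1; omega
    linear_combination ((T 1 - 1 : LaurentPolynomial K) ^ n) * h1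
      + (qbin K η n i * qfact K η i * qfact K η (n-i)) * h2
  have leib : ∀ (n : ℕ) (a b : A), Δ^[n] (a * b)
      = ∑ i ∈ Finset.range (n+1),
          qbin K η n i • (σ^[i] (Δ^[n-i] a) * Δ^[i] b) := by
    intro n
    induction n with
    | zero => intro a b; simp [qbin_zero]
    | succ n ih =>
      intro a b
      have step : Δ^[n+1] (a*b) = ∑ i ∈ Finset.range (n+1),
          (qbin K η n i • (σ^[i+1] (Δ^[n-i] a) * Δ^[i+1] b)
            + (qbin K η n i * (T η : LaurentPolynomial K)^i) •
                (σ^[i] (Δ^[n+1-i] a) * Δ^[i] b)) := by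
        rw [Function.iterate_succ_apply', ih a b, Δsum]
        refine Finset.sum_congr rfl ?_
        intro i hi
        have hi' : i ≤ n := Nat.lt_succ_iff.mp (Finset.mem_range.mp hi)
        rw [hΔl, hΔder, Δσi i (Δ^[n-i] a),
          ← Function.iterate_succ_apply' σ i (Δ^[n-i] a),
          ← Function.iterate_succ_apply' Δ i b,
          ← Function.iterate_succ_apply' Δ (n-i) a]
        simp only [Nat.succ_eq_add_one]
        rw [show n - i + 1 = n + 1 - i from by omega,
          smul_mul_assoc, smul_add, smul_smul]
      rw [step, Finset.sum_add_distrib]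
      have hrhs : ∑ i ∈ Finset.range (n+1+1),
          qbin K η (n+1) i • (σ^[i] (Δ^[n+1-i] a) * Δ^[i] b)
          = (∑ i ∈ Finset.range (n+1), qbin K η n i • (σ^[i+1] (Δ^[n-i] a) * Δ^[i+1] b))
            + ∑ i ∈ Finset.range (n+1),
                (qbin K η n i * (T η : LaurentPolynomial K)^i) •
                  (σ^[i] (Δ^[n+1-i] a) * Δ^[i] b) := by
        set g : ℕ → A := fun i => (qbin K η n i * (T η : LaurentPolynomial K)^i) •
          (σ^[i] (Δ^[n+1-i] a) * Δ^[i] b) with hg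
        rw [Finset.sum_range_succ']
        have h1 : ∀ i ∈ Finset.range (n+1),
            qbin K η (n+1) (i+1) • (σ^[i+1] (Δ^[n+1-(i+1)] a) * Δ^[i+1] b)
              = qbin K η n i • (σ^[i+1] (Δ^[n-i] a) * Δ^[i+1] b) + g (i+1) := by
          intro i hi
          simp only [hg, Nat.succ_sub_succ]
          rw [qbin_succ, add_smul, mul_comm ((T η : LaurentPolynomial K) ^ (i+1))]
        rw [Finset.sum_congr rfl h1, Finset.sum_add_distrib, add_assoc]
        congr 1
        have h3 : qbin K η (n+1) 0 • (σ^[0] (Δ^[n+1-0] a) * Δ^[0] b) = g 0 := by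
          simp only [hg, qbin_zero, pow_zero, mul_one, one_mul]
        rw [h3, ← Finset.sum_range_succ' g (n+1), Finset.sum_range_succ]
        have h4 : g (n+1) = 0 := by
          simp only [hg, qbin_of_lt K η (Nat.lt_succ_self n), zero_mul, zero_smul]
        rw [h4, add_zero]
      rw [hrhs]
  have leibc : ∀ (n : ℕ) (a b : A), Δ^[n] (a * b)
      = (((T 1 - 1 : LaurentPolynomial K) ^ n) * qfact K η n) •
          ∑ i ∈ Finset.range (n+1), σ^[i] (dv (n-i) a) * dv i b := by
    intro n a b
    rw [leib n a b, Finset.smul_sum]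
    refine Finset.sum_congr rfl ?_
    intro i hi
    have hi' : i ≤ n := Nat.lt_succ_iff.mp (Finset.mem_range.mp hi)
    rw [hdv (n-i) a, hdv i b, σIsmul, smul_mul_smul_comm, smul_smul, hcc n i hi']
  have comm_rep : ∀ x y : A, ∃ w : A,
      x * y - y * x = (T 1 - 1 : LaurentPolynomial K) • w ∧ π w = Q.br (π x) (π y) := by
    intro x y
    have h0 : π (x * y - y * x) = 0 := by
      rw [map_sub, map_mul, map_mul, mul_comm, sub_self]
    obtain ⟨w, hw⟩ := (hker _).mp h0
    exact ⟨w, hw, (hQ x y w hw).symm⟩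
  have kappa : ∀ (i : ℕ) (x : A), ∃ k : A,
      σ^[i] x = x + (T 1 - 1 : LaurentPolynomial K) • k ∧ π k = i • α (π x) := by
    intro i
    induction i with
    | zero => intro x; exact ⟨0, by simp, by simp⟩
    | succ i ih =>
      intro x
      obtain ⟨k, hk1, hk2⟩ := ih x
      obtain ⟨g, hg⟩ := hσdiv x
      refine ⟨g + σ k, ?_, ?_⟩
      · rw [Function.iterate_succ_apply', hk1, map_add, hσl, smul_add]
        have hσx : σ x = x + (T 1 - 1 : LaurentPolynomial K) • g := by rw [← hg]; abel
        rw [hσx]; abel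
      · rw [map_add, πσ, hk2, hα x g hg, succ_nsmul]
        exact add_comm _ _
  have expand : ∀ (n : ℕ) (x y : ℕ → A) (κ : ℕ → A),
      (∀ i, σ^[i] (x i) = x i + (T 1 - 1 : LaurentPolynomial K) • κ i) →
      ∑ i ∈ Finset.range (n+1), σ^[i] (x i) * y i
        = ∑ i ∈ Finset.range (n+1), x i * y i
          + (T 1 - 1 : LaurentPolynomial K) • ∑ i ∈ Finset.range (n+1), κ i * y i := by
    intro n x y κ hκ
    rw [Finset.smul_sum, ← Finset.sum_add_distrib]
    refine Finset.sum_congr rfl ?_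
    intro i _
    rw [hκ i, add_mul, smul_mul_assoc]
  refine ⟨D, key, ?_, ?_, ?_, ?_, ?_, ?_, ?_, ?_⟩
  · -- D 0 = id
    intro a
    refine key 0 a a ?_
    simp [qfact_zero]
  · -- additivity
    intro i a b
    rw [← map_add]
    rw [key i (a+b) (dv i a + dv i b) (by rw [ΔIadd, hdv i a, hdv i b, smul_add]),
      map_add, key i a (dv i a) (hdv i a), key i b (dv i b) (hdv i b)]
  · -- product rule
    intro n a b
    rw [← map_mul, key n (a*b) _ (leibc n a b), map_sum]
    have hDa : ∀ k, D k (π a) = π (dv k a) := fun k => key k a _ (hdv k a)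
    have hDb : ∀ k, D k (π b) = π (dv k b) := fun k => key k b _ (hdv k b)
    rw [show (∑ i ∈ Finset.range (n+1), D i (π a) * D (n-i) (π b))
        = ∑ i ∈ Finset.range (n+1), π (dv i a) * π (dv (n-i) b) from
      Finset.sum_congr rfl fun i _ => by rw [hDa, hDb]]
    rw [← Finset.sum_range_reflect (fun i => π (dv i a) * π (dv (n-i) b)) (n+1)]
    refine Finset.sum_congr rfl ?_
    intro i hi
    have hi' : i ≤ n := Nat.lt_succ_iff.mp (Finset.mem_range.mp hi)
    rw [map_mul, πσi]
    simp only [Nat.add_sub_cancel]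
    rw [Nat.sub_sub_self hi']
  · -- extends δ
    intro a b hb
    refine key 1 a b ?_
    rw [Function.iterate_one, hb, pow_one, qfact_one, mul_one]
  · -- A2
    intro n a b
    obtain ⟨z, hz, hbr⟩ := comm_rep a b
    rw [← hbr]
    choose κ hκ1 hκ2 using kappa
    choose y hy1 hy2 using fun i => comm_rep (dv (n-i) a) (dv i b)
    set W : A := ∑ i ∈ Finset.range (n+1), y i
      + (∑ i ∈ Finset.range (n+1), κ i (dv (n-i) a) * dv i b
         - ∑ i ∈ Finset.range (n+1), κ i (dv (n-i) b) * dv i a) with hW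
    have hS1 := expand n (fun i => dv (n-i) a) (fun i => dv i b)
      (fun i => κ i (dv (n-i) a)) (fun i => hκ1 i _)
    have hS2 := expand n (fun i => dv (n-i) b) (fun i => dv i a)
      (fun i => κ i (dv (n-i) b)) (fun i => hκ1 i _)
    have hP : ∑ i ∈ Finset.range (n+1), dv (n-i) a * dv i b
        - ∑ i ∈ Finset.range (n+1), dv (n-i) b * dv i a
        = (T 1 - 1 : LaurentPolynomial K) • ∑ i ∈ Finset.range (n+1), y i := by
      have hrefl : ∑ i ∈ Finset.range (n+1), dv (n-i) b * dv i a
          = ∑ i ∈ Finset.range (n+1), dv i b * dv (n-i) a := by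
        rw [← Finset.sum_range_reflect (fun i => dv i b * dv (n-i) a) (n+1)]
        refine Finset.sum_congr rfl ?_
        intro i hi
        have hi' : i ≤ n := Nat.lt_succ_iff.mp (Finset.mem_range.mp hi)
        simp only [Nat.add_sub_cancel]
        rw [Nat.sub_sub_self hi']
      rw [hrefl, ← Finset.sum_sub_distrib, Finset.smul_sum]
      exact Finset.sum_congr rfl fun i _ => hy1 i
    have hMain : Δ^[n] z = (((T 1 - 1 : LaurentPolynomial K) ^ n) * qfact K η n) • W := by
      apply cancel (T 1 - 1 : LaurentPolynomial K) _ _ hu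
      calc (T 1 - 1 : LaurentPolynomial K) • Δ^[n] z
          = Δ^[n] ((T 1 - 1 : LaurentPolynomial K) • z) := (ΔIsmul n _ z).symm
        _ = Δ^[n] (a*b) - Δ^[n] (b*a) := by rw [← hz, ΔIsub]
        _ = (((T 1 - 1 : LaurentPolynomial K) ^ n) * qfact K η n) •
              ((∑ i ∈ Finset.range (n+1), σ^[i] (dv (n-i) a) * dv i b)
               - ∑ i ∈ Finset.range (n+1), σ^[i] (dv (n-i) b) * dv i a) := by
            rw [leibc n a b, leibc n b a, smul_sub]
        _ = (((T 1 - 1 : LaurentPolynomial K) ^ n) * qfact K η n) •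
              ((T 1 - 1 : LaurentPolynomial K) • W) := by
            congr 1
            rw [hS1, hS2, hW, smul_add, smul_sub, ← hP]
            abel
        _ = (T 1 - 1 : LaurentPolynomial K) •
              ((((T 1 - 1 : LaurentPolynomial K) ^ n) * qfact K η n) • W) :=
            smul_comm _ _ _
    rw [key n z W hMain]
    have hDa : ∀ k, D k (π a) = π (dv k a) := fun k => key k a _ (hdv k a)
    have hDb : ∀ k, D k (π b) = π (dv k b) := fun k => key k b _ (hdv k b)
    simp only [hDa, hDb]
    rw [hW, map_add, map_sub, map_sum, map_sum, map_sum, Finset.sum_add_distrib]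
    congr 1
    · rw [← Finset.sum_range_reflect (fun i => Q.br (π (dv i a)) (π (dv (n-i) b))) (n+1)]
      refine Finset.sum_congr rfl ?_
      intro i hi
      have hi' : i ≤ n := Nat.lt_succ_iff.mp (Finset.mem_range.mp hi)
      rw [hy2 i]
      simp only [Nat.add_sub_cancel]
      rw [Nat.sub_sub_self hi']
    · have e1 : ∀ i ∈ Finset.range (n+1), π (κ i (dv (n-i) a) * dv i b)
          = i • (α (π (dv (n-i) a)) * π (dv i b)) := by
        intro i _
        rw [map_mul, hκ2, smul_mul_assoc]
      have e2 : ∀ i ∈ Finset.range (n+1), π (κ i (dv (n-i) b) * dv i a)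
          = i • (π (dv i a) * α (π (dv (n-i) b))) := by
        intro i _
        rw [map_mul, hκ2, smul_mul_assoc, mul_comm (α (π (dv (n-i) b)))]
      rw [Finset.sum_congr rfl e1, Finset.sum_congr rfl e2, ← Finset.sum_sub_distrib]
      exact Finset.sum_congr rfl fun i _ => (smul_sub _ _ _).symm
  · -- A3
    intro i a
    obtain ⟨g, hg⟩ := hσdiv a
    rw [hα a g hg]
    obtain ⟨h, hh⟩ := T_mod K ((i : ℤ) * η)
    obtain ⟨g', hg'⟩ := hσdiv (dv i a)
    have hσw : σ (dv i a) = dv i a + (T 1 - 1 : LaurentPolynomial K) • g' := by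
      rw [← hg']; abel
    have hTi : (T η : LaurentPolynomial K) ^ i = T ((i:ℤ) * η) := T_pow η i
    set W' : A := g' + ((((i : ℤ) * η : ℤ) : LaurentPolynomial K) • σ (dv i a)
      + ((T 1 - 1 : LaurentPolynomial K) * h) • σ (dv i a)) with hW'
    have hMain : Δ^[i] g = (((T 1 - 1 : LaurentPolynomial K) ^ i) * qfact K η i) • W' := by
      apply cancel (T 1 - 1 : LaurentPolynomial K) _ _ hu
      have hL : (T 1 - 1 : LaurentPolynomial K) • Δ^[i] g = Δ^[i] (σ a) - Δ^[i] a := by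
        rw [← ΔIsmul, ← hg, ΔIsub]
      rw [hL, ΔiσI, hdv i a, hσl, hTi, hh, hW', hσw]
      module
    rw [key i g W' hMain, key i a _ (hdv i a), hW', map_add, map_add,
      Int.cast_smul_eq_zsmul, map_zsmul, πσ,
      mul_smul (T 1 - 1 : LaurentPolynomial K) h (σ (dv i a)), π0, add_zero,
      ← hα (dv i a) g' hg']
    have hsc : (i • ((η : ℤ) : K)) • π (dv i a) = ((i : ℤ) * η) • π (dv i a) := by
      have hc : (i • ((η : ℤ) : K)) = (((i : ℤ) * η : ℤ) : K) := by push_cast; ring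
      rw [hc, Int.cast_smul_eq_zsmul]
    rw [hsc]
  · -- iterativity
    intro i j a
    have h1 : D j (π a) = π (dv j a) := key j a _ (hdv j a)
    rw [h1]
    have h2 : Δ^[i] (dv j a) = (((T 1 - 1 : LaurentPolynomial K) ^ i) * qfact K η i) •
        (qbin K η (i+j) i • dv (i+j) a) := by
      apply cancel (((T 1 - 1 : LaurentPolynomial K) ^ j) * qfact K η j) _ _ (hcne j)
      have e1 : ((T 1 - 1 : LaurentPolynomial K) ^ j * qfact K η j) • Δ^[i] (dv j a)
          = Δ^[i+j] a := by
        rw [← ΔIsmul, ← hdv j a, ← Function.iterate_add_apply]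
      rw [e1, hdv (i+j) a, smul_smul, smul_smul]
      congr 1
      have h3 := hcc (i+j) i (Nat.le_add_right i j)
      rw [Nat.add_sub_cancel_left] at h3
      linear_combination -h3
    rw [key i (dv j a) _ h2, πqbin, key (i+j) a _ (hdv (i+j) a)]
  · -- local nilpotence
    intro hnil a
    obtain ⟨N, hN⟩ := hnil a
    refine ⟨N, fun i hi => ?_⟩
    rw [key i a 0 (by rw [hN i hi, smul_zero]), map_zero]
end
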